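/- For every assemblée A of size (n,r) with block-ends b_1 > ... > b_r, read in canonical order: |lrs(ρ(A))| equals the number of entries x of A with x > b_1 such that x exceeds every entry to its left (left-to-right maxima of A greater than b_1), and |rls(ρ(A))| equals the number of entries x of A with x < b_r such that x is smaller than every entry to its left (left-to-right minima of A smaller than b_r). -/

import Mathlib

open Finset

/-- An assemblée (in canonical order) of size `(n, r)`, encoded as a permutation
`w` of `Fin n` (position `p` holds the value `(w p : ℕ) + 1 ∈ {1,…,n}`) together
with the set `E` of positions of the `r` block-ends: the last position is a
block-end, and the block-end values decrease from left to right. -/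
def IsAssemblee (n r : ℕ) (w : Equiv.Perm (Fin n)) (E : Finset (Fin n)) : Prop :=
  E.card = r ∧
  (∀ p : Fin n, (p : ℕ) = n - 1 → p ∈ E) ∧
  (∀ p ∈ E, ∀ q ∈ E, p < q → w q < w p)

instance (n r : ℕ) :
    DecidablePred fun x : Equiv.Perm (Fin n) × Finset (Fin n) => IsAssemblee n r x.1 x.2 :=
  fun _ => by unfold IsAssemblee; infer_instance

/-- The type of assemblées of size `(n, r)`, in canonical order. -/
def Assemblee (n r : ℕ) : Type :=
  {x : Equiv.Perm (Fin n) × Finset (Fin n) // IsAssemblee n r x.1 x.2}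

instance (n r : ℕ) : Fintype (Assemblee n r) := Subtype.fintype _

namespace Assemblee

variable {n r : ℕ}

/-- The value (an element of `{1,…,n}`) at position `p`. -/
def val (A : Assemblee n r) (p : Fin n) : ℕ := (A.1.1 p : ℕ) + 1

/-- The set of positions of the block-ends. -/
def ends (A : Assemblee n r) : Finset (Fin n) := A.1.2

/-- The set of values of the block-ends. -/
def blockEnds (A : Assemblee n r) : Finset ℕ := A.ends.image A.val

/-- The largest block-end `b₁`. -/
def b1 (A : Assemblee n r) : ℕ := WithBot.unbotD 0 A.blockEnds.max

/-- The smallest block-end `b_r`. -/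
def br (A : Assemblee n r) : ℕ := WithTop.untopD 0 A.blockEnds.min

/-- The left-right sequence of `A`: those values `x > b₁` such that every value
`y > x` occurs to the left of `x`. -/
def lrs (A : Assemblee n r) : Finset ℕ :=
  (univ.filter fun p : Fin n =>
      A.b1 < A.val p ∧ ∀ q : Fin n, A.val p < A.val q → q < p).image A.val

/-- The right-left sequence of `A`: those values `x < b_r` such that every value
`y` with `x < y < b_r` occurs to the right of `x`. -/
def rls (A : Assemblee n r) : Finset ℕ :=
  (univ.filter fun p : Fin n =>
      A.val p < A.br ∧ ∀ q : Fin n, A.val p < A.val q → A.val q < A.br → p < q).image A.val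

end Assemblee

namespace Assemblee

variable {n r : ℕ}

/-- Positions holding values greater than `b₁`. -/
def largeSet (A : Assemblee n r) : Finset (Fin n) :=
  univ.filter fun q => A.b1 < A.val q

/-- The order-reversing involution on the positions holding values greater
than `b₁` (the `i`-th such position from the left is sent to the `i`-th from
the right). -/
def largeMirror (A : Assemblee n r) (p : Fin n) (hp : p ∈ A.largeSet) : Fin n :=
  (A.largeSet.orderIsoOfFin rfl
    (Fin.rev ((A.largeSet.orderIsoOfFin rfl).symm ⟨p, hp⟩)) : Fin n)

/-- The sequence of values of `ρ(A)`: the subsequence `a₁,…,a_u` of values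
greater than `b₁` is reversed in place (`aᵢ ↦ a_{u-i+1}`), every value
`c < b_r` is replaced by `b_r - c`, and all other values are unchanged. -/
def rhoVal (A : Assemblee n r) (p : Fin n) : ℕ :=
  if hp : p ∈ A.largeSet then A.val (A.largeMirror p hp)
  else if A.val p < A.br then A.br - A.val p
  else A.val p

end Assemblee

namespace Assemblee

variable {n r : ℕ} (A : Assemblee n r)

lemma val_injective : Function.Injective A.val := by
  intro p q h
  exact A.1.1.injective (Fin.ext (Nat.add_right_cancel h))

lemma one_le_val (p : Fin n) : 1 ≤ A.val p := Nat.le_add_left 1 _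

lemma blockEnds_nonempty (hn : 0 < n) : A.blockEnds.Nonempty := by
  have hp : (⟨n - 1, by omega⟩ : Fin n) ∈ A.ends := A.2.2.1 _ rfl
  exact ⟨A.val ⟨n - 1, by omega⟩, Finset.mem_image_of_mem _ hp⟩

lemma le_b1 {x : ℕ} (hn : 0 < n) (hx : x ∈ A.blockEnds) : x ≤ A.b1 := by
  have h := A.blockEnds_nonempty hn
  have : A.b1 = A.blockEnds.max' h := by
    rw [b1, ← A.blockEnds.coe_max' h, WithBot.unbotD_coe]
  rw [this]
  exact Finset.le_max' _ _ hx

lemma br_le {x : ℕ} (hn : 0 < n) (hx : x ∈ A.blockEnds) : A.br ≤ x := by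
  have h := A.blockEnds_nonempty hn
  have : A.br = A.blockEnds.min' h := by
    rw [br, ← A.blockEnds.coe_min' h, WithTop.untopD_coe]
  rw [this]
  exact Finset.min'_le _ _ hx

lemma br_mem (hn : 0 < n) : A.br ∈ A.blockEnds := by
  have h := A.blockEnds_nonempty hn
  have : A.br = A.blockEnds.min' h := by
    rw [br, ← A.blockEnds.coe_min' h, WithTop.untopD_coe]
  rw [this]
  exact Finset.min'_mem _ _

lemma br_le_b1 (hn : 0 < n) : A.br ≤ A.b1 := A.le_b1 hn (A.br_mem hn)

lemma one_le_br (hn : 0 < n) : 1 ≤ A.br := by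
  obtain ⟨p, -, hp⟩ := Finset.mem_image.mp (A.br_mem hn)
  rw [← hp]; exact A.one_le_val p

lemma mirror_mem (p : Fin n) (hp : p ∈ A.largeSet) : A.largeMirror p hp ∈ A.largeSet :=
  (A.largeSet.orderIsoOfFin rfl
    (Fin.rev ((A.largeSet.orderIsoOfFin rfl).symm ⟨p, hp⟩))).2

lemma val_mirror_gt (p : Fin n) (hp : p ∈ A.largeSet) : A.b1 < A.val (A.largeMirror p hp) :=
  (Finset.mem_filter.mp (A.mirror_mem p hp)).2

lemma mirror_mirror (p : Fin n) (hp : p ∈ A.largeSet) :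
    A.largeMirror (A.largeMirror p hp) (A.mirror_mem p hp) = p := by
  simp only [largeMirror, Subtype.coe_eta, OrderIso.symm_apply_apply, Fin.rev_rev,
    OrderIso.apply_symm_apply]

lemma mirror_lt_mirror {p q : Fin n} (hp : p ∈ A.largeSet) (hq : q ∈ A.largeSet) :
    A.largeMirror p hp < A.largeMirror q hq ↔ q < p := by
  simp only [largeMirror, Subtype.coe_lt_coe, OrderIso.lt_iff_lt, Fin.rev_lt_rev,
    Subtype.mk_lt_mk]

lemma mirror_inj {p q : Fin n} (hp : p ∈ A.largeSet) (hq : q ∈ A.largeSet)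
    (h : A.largeMirror p hp = A.largeMirror q hq) : p = q := by
  have h2 := Subtype.ext (p := (· ∈ A.largeSet)) h
  have h3 := (A.largeSet.orderIsoOfFin rfl).injective h2
  have h4 := Fin.rev_injective h3
  have h5 := (A.largeSet.orderIsoOfFin rfl).symm.injective h4
  exact congrArg Subtype.val h5

lemma rhoVal_of_mem_largeSet {p : Fin n} (hp : p ∈ A.largeSet) :
    A.rhoVal p = A.val (A.largeMirror p hp) := dif_pos hp

lemma rhoVal_of_end (hn : 0 < n) {p : Fin n} (hp : p ∈ A.ends) : A.rhoVal p = A.val p := by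
  have h1 : A.val p ∈ A.blockEnds := Finset.mem_image_of_mem _ hp
  have h2 : A.val p ≤ A.b1 := A.le_b1 hn h1
  have h3 : A.br ≤ A.val p := A.br_le hn h1
  have hns : p ∉ A.largeSet := by
    simp only [largeSet, Finset.mem_filter, Finset.mem_univ, true_and]; omega
  rw [rhoVal, dif_neg hns, if_neg (by omega)]

lemma rhoVal_of_small (hn : 0 < n) {p : Fin n} (hp : A.val p < A.br) :
    A.rhoVal p = A.br - A.val p := by
  have hns : p ∉ A.largeSet := by
    have := A.br_le_b1 hn
    simp only [largeSet, Finset.mem_filter, Finset.mem_univ, true_and]; omega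
  rw [rhoVal, dif_neg hns, if_pos hp]

lemma lt_rhoVal_iff (hn : 0 < n) (q : Fin n) : A.b1 < A.rhoVal q ↔ q ∈ A.largeSet := by
  by_cases hq : q ∈ A.largeSet
  · rw [A.rhoVal_of_mem_largeSet hq]
    exact iff_of_true (A.val_mirror_gt q hq) hq
  · have hle : ¬ A.b1 < A.val q := by
      simpa only [largeSet, Finset.mem_filter, Finset.mem_univ, true_and] using hq
    have h1 := A.one_le_br hn
    have h2 := A.br_le_b1 hn
    rw [rhoVal, dif_neg hq]
    split_ifs with h <;> exact iff_of_false (by omega) hq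

lemma rhoVal_lt_br_iff (hn : 0 < n) (q : Fin n) : A.rhoVal q < A.br ↔ A.val q < A.br := by
  by_cases hq : q ∈ A.largeSet
  · rw [A.rhoVal_of_mem_largeSet hq]
    have h1 := A.val_mirror_gt q hq
    have h2 : A.b1 < A.val q := (Finset.mem_filter.mp hq).2
    have h3 := A.br_le_b1 hn
    constructor <;> intro <;> omega
  · rw [rhoVal, dif_neg hq]
    have := A.one_le_val q
    split_ifs with h <;> omega

end Assemblee

/-- For every assemblée `A` of size `(n,r)` with block-ends
`b₁ > … > b_r`, read in canonical order: `|lrs(ρ(A))|` equals the number of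
entries `x > b₁` of `A` that exceed every entry to their left (left-to-right
maxima of `A` greater than `b₁`), and `|rls(ρ(A))|` equals the number of entries
`x < b_r` of `A` that are smaller than every entry to their left (left-to-right
minima of `A` smaller than `b_r`). -/
theorem lrs_rls_of_rho (n r : ℕ) (A B : Assemblee n r)
    (hends : B.ends = A.ends) (hval : B.val = A.rhoVal) :
    B.lrs.card =
      (Finset.univ.filter fun p : Fin n =>
        A.b1 < A.val p ∧ ∀ q : Fin n, q < p → A.val q < A.val p).card ∧
    B.rls.card =
      (Finset.univ.filter fun p : Fin n =>
        A.val p < A.br ∧ ∀ q : Fin n, q < p → A.val p < A.val q).card := by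
  rcases Nat.eq_zero_or_pos n with hn | hn
  · subst hn
    simp [Assemblee.lrs, Assemblee.rls]
  have hinjB : Function.Injective B.val := B.val_injective
  have hinjA : Function.Injective A.val := A.val_injective
  have hBE : B.blockEnds = A.blockEnds := by
    rw [Assemblee.blockEnds, Assemblee.blockEnds, hends]
    exact Finset.image_congr fun p hp => by rw [hval, A.rhoVal_of_end hn hp]
  have hb1 : B.b1 = A.b1 := by rw [Assemblee.b1, Assemblee.b1, hBE]
  have hbr : B.br = A.br := by rw [Assemblee.br, Assemblee.br, hBE]
  have keyL : ∀ p : Fin n, B.b1 < B.val p ↔ p ∈ A.largeSet := by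
    intro p; rw [hb1, hval]; exact A.lt_rhoVal_iff hn p
  have hBval : ∀ (q : Fin n) (hq : q ∈ A.largeSet),
      B.val (A.largeMirror q hq) = A.val q := by
    intro q hq
    rw [hval, A.rhoVal_of_mem_largeSet (A.mirror_mem q hq), A.mirror_mirror q hq]
  have hBval2 : ∀ (q : Fin n) (hq : q ∈ A.largeSet),
      B.val q = A.val (A.largeMirror q hq) := by
    intro q hq; rw [hval]; exact A.rhoVal_of_mem_largeSet hq
  constructor
  · rw [Assemblee.lrs, Finset.card_image_of_injective _ hinjB]
    refine Finset.card_bij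
      (fun p hp => A.largeMirror p ((keyL p).mp (Finset.mem_filter.mp hp).2.1)) ?_ ?_ ?_
    · intro p hp
      obtain ⟨-, h1, h2⟩ := Finset.mem_filter.mp hp
      have hpL : p ∈ A.largeSet := (keyL p).mp h1
      refine Finset.mem_filter.mpr ⟨Finset.mem_univ _, A.val_mirror_gt p hpL, ?_⟩
      intro q hq
      by_contra hc
      push_neg at hc
      have hne : A.val (A.largeMirror p hpL) ≠ A.val q :=
        fun h => (ne_of_lt hq) (hinjA h).symm
      have hlt : A.val (A.largeMirror p hpL) < A.val q := lt_of_le_of_ne hc hne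
      have hqL : q ∈ A.largeSet := Finset.mem_filter.mpr
        ⟨Finset.mem_univ _, lt_trans (A.val_mirror_gt p hpL) hlt⟩
      have hBlt : B.val p < B.val (A.largeMirror q hqL) := by
        rw [hBval q hqL, hBval2 p hpL]; exact hlt
      have h3 : A.largeMirror q hqL < p := h2 _ hBlt
      have h4 : A.largeMirror p hpL < q :=
        (A.mirror_lt_mirror hqL (A.mirror_mem p hpL)).mp
          (by rw [A.mirror_mirror p hpL]; exact h3)
      exact absurd h4 (lt_asymm hq)
    · intro a ha b hb h
      exact A.mirror_inj _ _ h
    · intro t ht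
      obtain ⟨-, h1, h2⟩ := Finset.mem_filter.mp ht
      have htL : t ∈ A.largeSet := Finset.mem_filter.mpr ⟨Finset.mem_univ _, h1⟩
      have hmt := A.mirror_mem t htL
      refine ⟨A.largeMirror t htL,
        Finset.mem_filter.mpr ⟨Finset.mem_univ _, (keyL _).mpr hmt, ?_⟩, ?_⟩
      · intro q hq
        rw [hBval t htL] at hq
        have hqL : q ∈ A.largeSet := (keyL q).mp (by rw [hb1]; exact lt_trans h1 hq)
        rw [hBval2 q hqL] at hq
        have hne : t ≠ A.largeMirror q hqL := fun h => (ne_of_lt hq) (congrArg A.val h)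
        have h3 : t < A.largeMirror q hqL := by
          rcases hne.lt_or_gt with h | h
          · exact h
          · exact absurd (h2 _ h) (not_lt_of_gt hq)
        have h4 : A.largeMirror (A.largeMirror q hqL) (A.mirror_mem q hqL)
            < A.largeMirror t htL :=
          (A.mirror_lt_mirror (A.mirror_mem q hqL) htL).mpr h3
        rwa [A.mirror_mirror q hqL] at h4
      · exact A.mirror_mirror t htL
  · rw [Assemblee.rls, Finset.card_image_of_injective _ hinjB]
    congr 1
    refine Finset.filter_congr ?_
    intro p _
    have hsmall : ∀ q : Fin n, B.val q < B.br ↔ A.val q < A.br := by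
      intro q; rw [hbr, hval]; exact A.rhoVal_lt_br_iff hn q
    have hsv : ∀ q : Fin n, A.val q < A.br → B.val q = A.br - A.val q := by
      intro q h; rw [hval]; exact A.rhoVal_of_small hn h
    constructor
    · rintro ⟨h1, h2⟩
      have hA1 : A.val p < A.br := (hsmall p).mp h1
      refine ⟨hA1, ?_⟩
      intro q hq
      by_contra hc
      push_neg at hc
      have hne : A.val q ≠ A.val p := fun h => (ne_of_lt hq) (hinjA h)
      have hlt : A.val q < A.val p := lt_of_le_of_ne hc hne
      have hA2 : A.val q < A.br := lt_trans hlt hA1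
      have h1v := A.one_le_val q
      have hBlt : B.val p < B.val q := by rw [hsv p hA1, hsv q hA2]; omega
      exact absurd (h2 q hBlt ((hsmall q).mpr hA2)) (lt_asymm hq)
    · rintro ⟨h1, h2⟩
      refine ⟨(hsmall p).mpr h1, ?_⟩
      intro q hlt hqbr
      have hAq : A.val q < A.br := (hsmall q).mp hqbr
      rw [hsv p h1, hsv q hAq] at hlt
      have h1v := A.one_le_val p
      have hvq : A.val q < A.val p := by omega
      by_contra hc
      push_neg at hc
      have hne : q ≠ p := fun h => absurd (h ▸ hvq) (lt_irrefl _)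
      have : q < p := lt_of_le_of_ne hc hne
      exact absurd (h2 q this) (lt_asymm hvq)
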